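/- Whipple's transformation for balanced terminating ₄F₃ series: if n is a nonnegative integer and a + b + c + 1 - n = d + e + f (balance condition), then Σ_{i=0}^{n} (-n)_i (a)_i (b)_i (c)_i / (i! (d)_i (e)_i (f)_i) = [(e-a)_n (f-a)_n / ((e)_n (f)_n)] · Σ_{i=0}^{n} (-n)_i (a)_i (d-b)_i (d-c)_i / (i! (d)_i (e-b-c+d)_i (f-b-c+d)_i). -/

import Mathlib

noncomputable def poch (x : ℝ) (n : ℕ) : ℝ := ∏ i ∈ Finset.range n, (x + i)

lemma poch_zero (x : ℝ) : poch x 0 = 1 := by simp [poch]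

lemma poch_succ (x : ℝ) (n : ℕ) : poch x (n + 1) = poch x n * (x + n) := by
  simp [poch, Finset.prod_range_succ]

lemma poch_succ' (x : ℝ) (n : ℕ) : poch x (n + 1) = x * poch (x + 1) n := by
  rw [poch, Finset.prod_range_succ', mul_comm]
  simp only [Nat.cast_zero, add_zero, poch]
  congr 1
  apply Finset.prod_congr rfl
  intro i _
  push_cast; ring

lemma poch_add (x : ℝ) (m k : ℕ) : poch x (m + k) = poch x m * poch (x + m) k := by
  rw [poch, Finset.prod_range_add]
  congr 1
  apply Finset.prod_congr rfl
  intro i _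
  push_cast; ring

lemma poch_reflect (x : ℝ) (k : ℕ) : poch (1 - x - k) k = (-1) ^ k * poch x k := by
  induction k generalizing x with
  | zero => simp [poch_zero]
  | succ k ih =>
    rw [poch_succ', poch_succ]
    have h1 : (1 : ℝ) - x - (k + 1 : ℕ) + 1 = 1 - x - k := by push_cast; ring
    rw [h1, ih]
    push_cast; ring

/-- summand of the cleared Pfaff-Saalschütz identity -/
noncomputable def psF (x y z : ℝ) (m j : ℕ) : ℝ :=
  (-1) ^ j * (m.choose j) * poch x j * poch y j * poch (z + j) (m - j) *
    poch (x + y - z - m + 1 + j) (m - j)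

lemma psF_top (x y z : ℝ) (m : ℕ) : psF x y z m (m + 1) = 0 := by
  simp [psF, Nat.choose_eq_zero_of_lt]

/-- Cleared (division-free) Pfaff–Saalschütz identity. -/
lemma clearedPS (m : ℕ) (x y z : ℝ) :
    ∑ j ∈ Finset.range (m + 1), psF x y z m j
      = (-1) ^ m * poch (z - x) m * poch (z - y) m := by
  induction m with
  | zero => simp [psF, poch_zero]
  | succ m ih =>
    -- certificate function
    set A : ℕ → ℝ := fun j => match j with
      | 0 => 0
      | (j' + 1) => (x + j') * (y + j') * psF x y z m j' with hA
    have key : ∀ j ∈ Finset.range (m + 2),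
        psF x y z (m + 1) j
          = (A (j + 1) - A j) - ((z - x + m) * (z - y + m)) * psF x y z m j := by
      intro j hj
      rw [Finset.mem_range] at hj
      match j with
      | 0 =>
        -- boundary case j = 0
        simp only [hA]
        simp only [psF, Nat.choose_zero_right, Nat.sub_zero, pow_zero, Nat.cast_zero,
          Nat.cast_one, add_zero]
        simp only [poch_zero]
        have e1 : poch z (m + 1) = poch z m * (z + m) := poch_succ z m
        have e2 : poch (x + y - z - ((m + 1 : ℕ) : ℝ) + 1) (m + 1)
            = (x + y - z - (m : ℝ)) * poch (x + y - z - (m : ℝ) + 1) m := by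
          rw [show x + y - z - ((m + 1 : ℕ) : ℝ) + 1 = x + y - z - (m : ℝ) by push_cast; ring,
            poch_succ']
        rw [e1, e2]
        ring
      | (j' + 1) =>
        have hj' : j' < m + 1 := by omega
        rcases Nat.lt_succ_iff_lt_or_eq.mp hj' with hlt | heq
        · -- middle case 1 ≤ j = j'+1 ≤ m
          obtain ⟨k, hk⟩ : ∃ k, m = j' + 1 + k := ⟨m - j' - 1, by omega⟩
          subst hk
          have hk2 : j' + 1 + k + 1 - (j' + 1) = k + 1 := by omega
          have hk3 : j' + 1 + k - (j' + 1) = k := by omega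
          have hk1 : j' + 1 + k - j' = k + 1 := by omega
          simp only [hA, psF, hk1, hk2, hk3]
          rw [poch_succ x j', poch_succ y j']
          have hMc : ((j' + 1 + k : ℕ) : ℝ) = (j' : ℝ) + 1 + (k : ℝ) := by push_cast; ring
          have ez1 : poch (z + ((j' + 1 : ℕ) : ℝ)) (k + 1)
              = poch (z + ((j' : ℝ) + 1)) k * (z + ((j' + 1 + k : ℕ) : ℝ)) := by
            rw [poch_succ]; push_cast; ring_nf
          have ez2 : poch (z + (j' : ℝ)) (k + 1)
              = (z + (j' : ℝ)) * poch (z + ((j' : ℝ) + 1)) k := by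
            rw [poch_succ']; congr 1; ring
          set M : ℝ := ((j' + 1 + k : ℕ) : ℝ) with hM
          have ew1 : poch (x + y - z - ((j' + 1 + k + 1 : ℕ) : ℝ) + 1 + ((j' + 1 : ℕ) : ℝ)) (k + 1)
              = (x + y - z - M + 1 + (j' : ℝ)) * poch (x + y - z - M + 1 + ((j' + 1 : ℕ) : ℝ)) k := by
            rw [show x + y - z - ((j' + 1 + k + 1 : ℕ) : ℝ) + 1 + ((j' + 1 : ℕ) : ℝ)
                = x + y - z - M + 1 + (j' : ℝ) by rw [hM]; push_cast; ring, poch_succ']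
            congr 1
            rw [hM]; push_cast; ring
          have ew2 : poch (x + y - z - M + 1 + (j' : ℝ)) (k + 1)
              = (x + y - z - M + 1 + (j' : ℝ)) * poch (x + y - z - M + 1 + ((j' + 1 : ℕ) : ℝ)) k := by
            rw [poch_succ']; congr 1; push_cast; ring
          rw [ez1, ez2, ew1, ew2]
          rw [Nat.choose_succ_succ (j' + 1 + k) j']
          push_cast [hM]
          have hrel : ((j' + 1 + k).choose (j' + 1) : ℝ) * ((j' : ℝ) + 1)
              = ((j' + 1 + k).choose j' : ℝ) * (((j' : ℝ) + 1 + (k : ℝ)) - (j' : ℝ)) := by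
            have h := Nat.choose_succ_right_eq (j' + 1 + k) j'
            have h2 : j' + 1 + k - j' = k + 1 := by omega
            rw [h2] at h
            have h3 := congrArg (fun t : ℕ => (t : ℝ)) h
            push_cast at h3
            linarith [h3]
          linear_combination ((-1 : ℝ)^j' * (x + (j' : ℝ)) * (y + (j' : ℝ)) * poch x j' * poch y j'
            * poch (z + ((j' : ℝ) + 1)) k * poch (x + y - z - ((j' : ℝ) + 1 + (k : ℝ)) + 1 + ((j' : ℝ) + 1)) k
            * (x + y - z - ((j' : ℝ) + 1 + (k : ℝ)) + 1 + (j' : ℝ))) * hrel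
        · -- top case j = m+1  (here j' = m)
          rw [heq]
          simp only [hA, psF_top]
          have h1 : psF x y z (m + 1) (m + 1)
              = (-1) ^ (m + 1) * poch x (m + 1) * poch y (m + 1) := by
            simp [psF, Nat.sub_self, poch_zero]
          have h2 : psF x y z m m = (-1) ^ m * poch x m * poch y m * 1 *
              poch (x + y - z - m + 1 + m) 0 := by
            simp [psF, Nat.sub_self, poch_zero]
          rw [h1, h2, poch_zero, poch_succ, poch_succ]
          ring
    rw [Finset.sum_congr rfl key]
    rw [Finset.sum_sub_distrib, Finset.sum_range_sub A, ← Finset.mul_sum]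
    have hAtop : A (m + 2) = 0 := by
      simp only [hA]; rw [psF_top]; ring
    have hsum : ∑ j ∈ Finset.range (m + 2), psF x y z m j
        = (-1) ^ m * poch (z - x) m * poch (z - y) m := by
      rw [Finset.sum_range_succ, psF_top, add_zero, ih]
    rw [hAtop, hsum]
    simp only [hA]
    rw [poch_succ (z - x), poch_succ (z - y)]
    ring
lemma poch_neg_nat (m k : ℕ) (hk : k ≤ m) :
    poch (-(m : ℝ)) k = (-1) ^ k * (m.choose k : ℝ) * (k.factorial : ℝ) := by
  induction k with
  | zero => simp [poch_zero]
  | succ k ih =>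
    have hk' : k ≤ m := by omega
    rw [poch_succ, ih hk']
    have h := Nat.choose_succ_right_eq m k
    have h3 := congrArg (fun t : ℕ => (t : ℝ)) h
    push_cast [Nat.cast_sub hk'] at h3
    push_cast [Nat.factorial_succ]
    linear_combination ((-1 : ℝ) ^ k * (k.factorial : ℝ)) * h3

lemma poch_split (x : ℝ) (k m : ℕ) (hk : k ≤ m) :
    poch x m = poch x k * poch (x + k) (m - k) := by
  rw [← poch_add, Nat.add_sub_cancel' hk]

/-- Divided form of the Pfaff–Saalschütz identity. -/
lemma divPS (m : ℕ) (x y z w : ℝ) (hw : w = x + y - z - m + 1)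
    (hz : poch z m ≠ 0) (hwm : poch w m ≠ 0) :
    ∑ k ∈ Finset.range (m + 1),
      poch (-(m : ℝ)) k * poch x k * poch y k /
        ((k.factorial : ℝ) * poch z k * poch w k)
    = (-1) ^ m * poch (z - x) m * poch (z - y) m / (poch z m * poch w m) := by
  rw [← clearedPS m x y z, Finset.sum_div]
  apply Finset.sum_congr rfl
  intro k hk
  rw [Finset.mem_range] at hk
  have hk' : k ≤ m := by omega
  have hzs := poch_split z k m hk'
  have hws := poch_split w k m hk'
  have hz1 : poch z k ≠ 0 := fun h => hz (by rw [hzs, h, zero_mul])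
  have hz2 : poch (z + k) (m - k) ≠ 0 := fun h => hz (by rw [hzs, h, mul_zero])
  have hw1 : poch w k ≠ 0 := fun h => hwm (by rw [hws, h, zero_mul])
  have hw2 : poch (w + k) (m - k) ≠ 0 := fun h => hwm (by rw [hws, h, mul_zero])
  have hfac : (k.factorial : ℝ) ≠ 0 := by exact_mod_cast k.factorial_ne_zero
  rw [poch_neg_nat m k hk', psF, hzs, hws,
    show x + y - z - (m : ℝ) + 1 + k = w + k by rw [hw]]
  field_simp

/-- Pfaff–Saalschütz in product form (★). -/
lemma star (i : ℕ) (b c d : ℝ) :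
    poch b i * poch c i
      = ∑ j ∈ Finset.range (i + 1), (i.choose j : ℝ) * poch (d - b) j * poch (d - c) j *
          poch (d + j) (i - j) * poch (b + c - d) (i - j) := by
  have h := clearedPS i (d - b) (d - c) d
  have h2 : ∀ j ∈ Finset.range (i + 1),
      psF (d - b) (d - c) d i j
        = (-1) ^ i * ((i.choose j : ℝ) * poch (d - b) j * poch (d - c) j *
            poch (d + j) (i - j) * poch (b + c - d) (i - j)) := by
    intro j hj
    rw [Finset.mem_range] at hj
    have hj' : j ≤ i := by omega
    rw [psF, show d - b + (d - c) - d - (i : ℝ) + 1 + j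
        = 1 - (b + c - d) - ((i - j : ℕ) : ℝ) by push_cast [Nat.cast_sub hj']; ring,
      poch_reflect]
    have hsgn : ((-1 : ℝ)) ^ j * (-1) ^ (i - j) = (-1) ^ i := by
      rw [← pow_add, Nat.add_sub_cancel' hj']
    calc (-1 : ℝ) ^ j * (i.choose j : ℝ) * poch (d - b) j * poch (d - c) j *
          poch (d + j) (i - j) * ((-1) ^ (i - j) * poch (b + c - d) (i - j))
        = ((-1 : ℝ)) ^ j * (-1) ^ (i - j) * ((i.choose j : ℝ) * poch (d - b) j *
            poch (d - c) j * poch (d + j) (i - j) * poch (b + c - d) (i - j)) := by ring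
      _ = _ := by rw [hsgn]
  rw [Finset.sum_congr rfl h2, ← Finset.mul_sum] at h
  have hb : d - (d - b) = b := by ring
  have hc : d - (d - c) = c := by ring
  rw [hb, hc] at h
  have hne : ((-1 : ℝ)) ^ i ≠ 0 := pow_ne_zero i (by norm_num)
  have h5 : ((-1 : ℝ)) ^ i * (∑ j ∈ Finset.range (i + 1), (i.choose j : ℝ) * poch (d - b) j *
      poch (d - c) j * poch (d + j) (i - j) * poch (b + c - d) (i - j))
      = (-1 : ℝ) ^ i * (poch b i * poch c i) := by linear_combination h
  exact (mul_left_cancel₀ hne h5).symm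

/-- triangle sum swap -/
lemma tri (N : ℕ) (g : ℕ → ℕ → ℝ) :
    ∑ i ∈ Finset.range N, ∑ j ∈ Finset.range (i + 1), g i j
      = ∑ j ∈ Finset.range N, ∑ k ∈ Finset.range (N - j), g (j + k) j := by
  induction N with
  | zero => simp
  | succ N ih =>
    rw [Finset.sum_range_succ, ih]
    have h2 : ∀ j ∈ Finset.range (N + 1),
        ∑ k ∈ Finset.range (N + 1 - j), g (j + k) j
          = (∑ k ∈ Finset.range (N - j), g (j + k) j) + g N j := by
      intro j hj
      rw [Finset.mem_range] at hj
      rw [show N + 1 - j = (N - j) + 1 by omega, Finset.sum_range_succ,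
        show j + (N - j) = N by omega]
    rw [Finset.sum_congr rfl h2, Finset.sum_add_distrib]
    congr 1
    rw [Finset.sum_range_succ]
    simp
/-- Whipple's transformation for balanced terminating ₄F₃ series. -/
theorem stmt13 (n : ℕ) (a b c d e f : ℝ)
    (hbal : a + b + c + 1 - n = d + e + f)
    (hd : ∀ i ≤ n, poch d i ≠ 0) (he : ∀ i ≤ n, poch e i ≠ 0)
    (hf : ∀ i ≤ n, poch f i ≠ 0)
    (he' : ∀ i ≤ n, poch (e - b - c + d) i ≠ 0)
    (hf' : ∀ i ≤ n, poch (f - b - c + d) i ≠ 0) :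
    ∑ i ∈ Finset.range (n + 1),
      poch (-(n : ℝ)) i * poch a i * poch b i * poch c i /
        ((Nat.factorial i : ℝ) * poch d i * poch e i * poch f i)
    = (poch (e - a) n * poch (f - a) n / (poch e n * poch f n)) *
      ∑ i ∈ Finset.range (n + 1),
        poch (-(n : ℝ)) i * poch a i * poch (d - b) i * poch (d - c) i /
          ((Nat.factorial i : ℝ) * poch d i * poch (e - b - c + d) i *
            poch (f - b - c + d) i) := by
  have hjn : ∀ j, j ≤ n → ((n - j : ℕ) : ℝ) = (n : ℝ) - j := by
    intro j hj; push_cast [Nat.cast_sub hj]; ring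
  have stepJ : ∀ j ∈ Finset.range (n + 1),
      (∑ k ∈ Finset.range (n + 1 - j),
        poch (-(n : ℝ)) (j + k) * poch a (j + k) *
          ((((j + k).choose j : ℕ) : ℝ) * poch (d - b) j * poch (d - c) j *
            poch (d + j) (j + k - j) * poch (b + c - d) (j + k - j)) /
          ((Nat.factorial (j + k) : ℝ) * poch d (j + k) * poch e (j + k) * poch f (j + k)))
      = (poch (e - a) n * poch (f - a) n / (poch e n * poch f n)) *
          (poch (-(n : ℝ)) j * poch a j * poch (d - b) j * poch (d - c) j /
            ((Nat.factorial j : ℝ) * poch d j * poch (e - b - c + d) j *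
              poch (f - b - c + d) j)) := by
    intro j hjr
    rw [Finset.mem_range] at hjr
    have hj : j ≤ n := by omega
    -- nonvanishing facts
    have hen : poch e n ≠ 0 := he n le_rfl
    have hfn : poch f n ≠ 0 := hf n le_rfl
    have hej : poch e j ≠ 0 := fun h => hen (by rw [poch_split e j n hj, h, zero_mul])
    have hejk : poch (e + j) (n - j) ≠ 0 :=
      fun h => hen (by rw [poch_split e j n hj, h, mul_zero])
    have hfj : poch f j ≠ 0 := fun h => hfn (by rw [poch_split f j n hj, h, zero_mul])
    have hfjk : poch (f + j) (n - j) ≠ 0 :=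
      fun h => hfn (by rw [poch_split f j n hj, h, mul_zero])
    have hdj : poch d j ≠ 0 := hd j hj
    have he'j : poch (e - b - c + d) j ≠ 0 := he' j hj
    have hf'j : poch (f - b - c + d) j ≠ 0 := hf' j hj
    rw [show n + 1 - j = (n - j) + 1 from by omega]
    -- rewrite each term of the inner sum
    have step3k : ∀ k ∈ Finset.range ((n - j) + 1),
        poch (-(n : ℝ)) (j + k) * poch a (j + k) *
          ((((j + k).choose j : ℕ) : ℝ) * poch (d - b) j * poch (d - c) j *
            poch (d + j) (j + k - j) * poch (b + c - d) (j + k - j)) /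
          ((Nat.factorial (j + k) : ℝ) * poch d (j + k) * poch e (j + k) * poch f (j + k))
        = (poch (-(n : ℝ)) j * poch a j * poch (d - b) j * poch (d - c) j /
            ((Nat.factorial j : ℝ) * poch d j * poch e j * poch f j)) *
          (poch (-((n - j : ℕ) : ℝ)) k * poch (a + j) k * poch (b + c - d) k /
            ((Nat.factorial k : ℝ) * poch (e + j) k * poch (f + j) k)) := by
      intro k hkr
      rw [Finset.mem_range] at hkr
      have hjk : j + k ≤ n := by omega
      have hdjk := hd (j + k) hjk
      have hejk' := he (j + k) hjk
      have hfjk' := hf (j + k) hjk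
      rw [poch_add d j k] at hdjk
      rw [poch_add e j k] at hejk'
      rw [poch_add f j k] at hfjk'
      obtain ⟨hd1, hd2⟩ := mul_ne_zero_iff.mp hdjk
      obtain ⟨he1, he2⟩ := mul_ne_zero_iff.mp hejk'
      obtain ⟨hf1, hf2⟩ := mul_ne_zero_iff.mp hfjk'
      have hCn : (j + k).choose j ≠ 0 := Nat.choose_pos (Nat.le_add_right j k) |>.ne'
      have hC : (((j + k).choose j : ℕ) : ℝ) ≠ 0 := by exact_mod_cast hCn
      have hfacj : ((Nat.factorial j : ℕ) : ℝ) ≠ 0 := by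
        exact_mod_cast (Nat.factorial_ne_zero j)
      have hfack : ((Nat.factorial k : ℕ) : ℝ) ≠ 0 := by
        exact_mod_cast (Nat.factorial_ne_zero k)
      have hfacid : ((Nat.factorial (j + k) : ℕ) : ℝ)
          = (((j + k).choose j : ℕ) : ℝ) * (Nat.factorial j : ℝ) * (Nat.factorial k : ℝ) := by
        have h0 := Nat.choose_mul_factorial_mul_factorial (Nat.le_add_right j k)
        rw [Nat.add_sub_cancel_left] at h0
        exact_mod_cast h0.symm
      simp only [Nat.add_sub_cancel_left]
      rw [poch_add (-(n : ℝ)) j k, poch_add a j k, poch_add d j k, poch_add e j k,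
        poch_add f j k, show -(n : ℝ) + (j : ℝ) = -((n - j : ℕ) : ℝ) from by
          rw [hjn j hj]; ring, hfacid]
      field_simp
    rw [Finset.sum_congr rfl step3k, ← Finset.mul_sum]
    have hw : (f : ℝ) + j = a + (j : ℝ) + (b + c - d) - (e + (j : ℝ)) - ((n - j : ℕ) : ℝ) + 1 := by
      rw [hjn j hj]; linarith
    rw [divPS (n - j) (a + j) (b + c - d) (e + j) (f + j) hw hejk hfjk]
    rw [show (e : ℝ) + (j : ℝ) - (a + (j : ℝ)) = e - a from by ring,
      show (e : ℝ) + (j : ℝ) - (b + c - d) = (e - b - c + d) + (j : ℝ) from by ring]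
    -- key closed-form identity
    have hsgn : ((-1 : ℝ)) ^ (n - j) * ((-1 : ℝ)) ^ j = (-1 : ℝ) ^ n := by
      rw [← pow_add, Nat.sub_add_cancel hj]
    have hsq : ((-1 : ℝ)) ^ n * ((-1 : ℝ)) ^ n = 1 := by
      rw [← pow_add, Even.neg_one_pow ⟨n, rfl⟩]
    have A3 : poch (e - b - c + d) j * poch ((e - b - c + d) + (j : ℝ)) (n - j)
        = poch (e - b - c + d) n := (poch_split _ j n hj).symm
    have A4 : poch (e - b - c + d) n = (-1 : ℝ) ^ n * poch (f - a) n := by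
      rw [show e - b - c + d = 1 - (f - a) - (n : ℝ) from by linarith, poch_reflect]
    have A5 : poch (f - b - c + d) j
        = (-1 : ℝ) ^ j * poch (e - a + ((n - j : ℕ) : ℝ)) j := by
      rw [show f - b - c + d = 1 - (e - a + ((n - j : ℕ) : ℝ)) - (j : ℝ) from by
        rw [hjn j hj]; linarith, poch_reflect]
    have A6 : poch (e - a) (n - j) * poch (e - a + ((n - j : ℕ) : ℝ)) j = poch (e - a) n := by
      rw [← poch_add, Nat.sub_add_cancel hj]
    have K : ((-1 : ℝ)) ^ (n - j) * poch (e - a) (n - j) *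
        poch ((e - b - c + d) + (j : ℝ)) (n - j) * poch (e - b - c + d) j *
        poch (f - b - c + d) j = poch (e - a) n * poch (f - a) n := by
      calc ((-1 : ℝ)) ^ (n - j) * poch (e - a) (n - j) *
            poch ((e - b - c + d) + (j : ℝ)) (n - j) * poch (e - b - c + d) j *
            poch (f - b - c + d) j
          = ((-1 : ℝ)) ^ (n - j) * poch (e - a) (n - j) *
            (poch (e - b - c + d) j * poch ((e - b - c + d) + (j : ℝ)) (n - j)) *
            poch (f - b - c + d) j := by ring
        _ = ((-1 : ℝ)) ^ (n - j) * poch (e - a) (n - j) *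
            ((-1 : ℝ) ^ n * poch (f - a) n) *
            ((-1 : ℝ) ^ j * poch (e - a + ((n - j : ℕ) : ℝ)) j) := by rw [A3, A4, A5]
        _ = (((-1 : ℝ)) ^ (n - j) * ((-1 : ℝ)) ^ j) * ((-1 : ℝ) ^ n) *
            (poch (e - a) (n - j) * poch (e - a + ((n - j : ℕ) : ℝ)) j) *
            poch (f - a) n := by ring
        _ = ((-1 : ℝ) ^ n * ((-1 : ℝ)) ^ n) * poch (e - a) n * poch (f - a) n := by
            rw [hsgn, A6]
        _ = poch (e - a) n * poch (f - a) n := by rw [hsq]; ring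
    have hVj : (-1 : ℝ) ^ (n - j) * poch (e - a) (n - j) *
        poch ((e - b - c + d) + (j : ℝ)) (n - j) /
        (poch (e + (j : ℝ)) (n - j) * poch (f + (j : ℝ)) (n - j))
        = poch (e - a) n * poch (f - a) n * poch e j * poch f j /
          (poch e n * poch f n * poch (e - b - c + d) j * poch (f - b - c + d) j) := by
      rw [div_eq_div_iff (mul_ne_zero hejk hfjk)
        (by exact mul_ne_zero (mul_ne_zero (mul_ne_zero hen hfn) he'j) hf'j)]
      rw [poch_split e j n hj, poch_split f j n hj]
      linear_combination (poch e j * poch (e + (j : ℝ)) (n - j) * poch f j *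
        poch (f + (j : ℝ)) (n - j)) * K
    rw [hVj]
    have hfacj : ((Nat.factorial j : ℕ) : ℝ) ≠ 0 := by
      exact_mod_cast (Nat.factorial_ne_zero j)
    field_simp
  calc
    ∑ i ∈ Finset.range (n + 1),
        poch (-(n : ℝ)) i * poch a i * poch b i * poch c i /
          ((Nat.factorial i : ℝ) * poch d i * poch e i * poch f i)
      = ∑ i ∈ Finset.range (n + 1), ∑ j ∈ Finset.range (i + 1),
          poch (-(n : ℝ)) i * poch a i *
            (((i.choose j : ℕ) : ℝ) * poch (d - b) j * poch (d - c) j *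
              poch (d + j) (i - j) * poch (b + c - d) (i - j)) /
            ((Nat.factorial i : ℝ) * poch d i * poch e i * poch f i) := by
        apply Finset.sum_congr rfl
        intro i _
        rw [show poch (-(n : ℝ)) i * poch a i * poch b i * poch c i
            = poch (-(n : ℝ)) i * poch a i * (poch b i * poch c i) from by ring,
          star i b c d, Finset.mul_sum, Finset.sum_div]
    _ = ∑ j ∈ Finset.range (n + 1), ∑ k ∈ Finset.range (n + 1 - j),
          poch (-(n : ℝ)) (j + k) * poch a (j + k) *
            ((((j + k).choose j : ℕ) : ℝ) * poch (d - b) j * poch (d - c) j *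
              poch (d + j) (j + k - j) * poch (b + c - d) (j + k - j)) /
            ((Nat.factorial (j + k) : ℝ) * poch d (j + k) * poch e (j + k) * poch f (j + k)) :=
        tri (n + 1) (fun i j =>
          poch (-(n : ℝ)) i * poch a i *
            (((i.choose j : ℕ) : ℝ) * poch (d - b) j * poch (d - c) j *
              poch (d + j) (i - j) * poch (b + c - d) (i - j)) /
            ((Nat.factorial i : ℝ) * poch d i * poch e i * poch f i))
    _ = ∑ j ∈ Finset.range (n + 1),
          (poch (e - a) n * poch (f - a) n / (poch e n * poch f n)) *
            (poch (-(n : ℝ)) j * poch a j * poch (d - b) j * poch (d - c) j /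
              ((Nat.factorial j : ℝ) * poch d j * poch (e - b - c + d) j *
                poch (f - b - c + d) j)) := Finset.sum_congr rfl stepJ
    _ = _ := by rw [← Finset.mul_sum]
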